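/- arXiv:2106.14320 — 2 statements merged into one kernel-verified Lean document; each statement's English description precedes it below -/
import Mathlib

section
/- The Legendre polynomial L_{n} has exactly n distinct real roots, all lying in the open interval (−1, 1). -/
open Polynomial intervalIntegral

noncomputable def legendre : ℕ → Polynomial ℝ
  | 0 => 1
  | 1 => X
  | (n + 2) =>
      C ((2 * (n : ℝ) + 3) / ((n : ℝ) + 2)) * X * legendre (n + 1) -
        C (((n : ℝ) + 1) / ((n : ℝ) + 2)) * legendre n

namespace LegendreAux

/-- Rodrigues form (unnormalized). -/
noncomputable def P (n : ℕ) : ℝ[X] := derivative^[n] ((X ^ 2 - 1) ^ n)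

lemma iter_add (k : ℕ) (p q : ℝ[X]) :
    derivative^[k] (p + q) = derivative^[k] p + derivative^[k] q := by
  induction k generalizing p q with
  | zero => simp
  | succ k ih => simp [Function.iterate_succ_apply, ih]

lemma l1 (k : ℕ) (v : ℝ[X]) :
    derivative^[k + 1] (X * v)
      = X * derivative^[k + 1] v + C ((k : ℝ) + 1) * derivative^[k] v := by
  induction k generalizing v with
  | zero => simp [derivative_mul]; ring
  | succ k ih =>
    rw [Function.iterate_succ_apply, derivative_mul, derivative_X, one_mul,
      iter_add, ih (derivative v), ← Function.iterate_succ_apply,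
      ← Function.iterate_succ_apply]
    push_cast
    simp only [C_add, C_1]
    ring

lemma l2 (k : ℕ) (v : ℝ[X]) :
    derivative^[k + 2] ((X ^ 2 - 1) * v)
      = (X ^ 2 - 1) * derivative^[k + 2] v
        + C (2 * ((k : ℝ) + 2)) * X * derivative^[k + 1] v
        + C (((k : ℝ) + 2) * ((k : ℝ) + 1)) * derivative^[k] v := by
  have h : (X ^ 2 - 1 : ℝ[X]) * v = X * (X * v) + (-1 : ℝ) • v := by
    simp [smul_eq_C_mul]; ring
  rw [h, iter_add, iterate_derivative_smul, l1 (k + 1) (X * v), l1 (k + 1) v,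
    l1 k v]
  push_cast
  simp only [C_add, C_1, C_mul, smul_eq_C_mul, C_neg, map_ofNat]
  ring

lemma deriv_upow (m : ℕ) :
    derivative ((X ^ 2 - 1 : ℝ[X]) ^ (m + 1)) = C (2 * ((m : ℝ) + 1)) * X * (X ^ 2 - 1) ^ m := by
  rw [derivative_pow]
  simp only [derivative_sub, derivative_one, derivative_X_pow, sub_zero]
  push_cast
  simp only [C_add, C_1, C_mul, C_pow, map_ofNat]
  ring

lemma eqI (m : ℕ) :
    P (m + 2) = C (2 * ((m : ℝ) + 2)) * (X * P (m + 1)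
      + C ((m : ℝ) + 1) * derivative^[m] ((X ^ 2 - 1) ^ (m + 1))) := by
  have : P (m + 2) = derivative^[m + 1] (derivative ((X ^ 2 - 1) ^ (m + 2))) := by
    rw [P, Function.iterate_succ_apply]
  rw [this, deriv_upow (m + 1), mul_assoc, iterate_derivative_C_mul, l1 m]
  push_cast
  rw [P]
  push_cast
  ring

lemma eqA (m : ℕ) :
    P (m + 2) = (X ^ 2 - 1) * derivative (P (m + 1))
      + C (2 * ((m : ℝ) + 2)) * X * P (m + 1)
      + C (((m : ℝ) + 2) * ((m : ℝ) + 1)) * derivative^[m] ((X ^ 2 - 1) ^ (m + 1)) := by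
  have h1 : P (m + 2) = derivative^[m + 2] ((X ^ 2 - 1) * (X ^ 2 - 1) ^ (m + 1)) := by
    rw [P, ← pow_succ']
  have h2 : derivative^[m + 2] ((X ^ 2 - 1) ^ (m + 1)) = derivative (P (m + 1)) := by
    rw [P]; exact Function.iterate_succ_apply' _ _ _
  rw [h1, l2, h2, P]

lemma eqII (n : ℕ) :
    P (n + 1) = C (2 * ((n : ℝ) + 1)) * X * P n + 2 * (X ^ 2 - 1) * derivative (P n) := by
  cases n with
  | zero =>
    simp [P]
    rw [one_add_one_eq_two]; exact (map_ofNat C 2).symm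
  | succ m =>
    have hI := eqI m
    have hA := eqA m
    have hm2 : ((m : ℝ) + 2) ≠ 0 := by positivity
    -- 2*eqA - eqI gives the result
    have key : 2 * P (m + 2) - P (m + 2)
        = 2 * ((X ^ 2 - 1) * derivative (P (m + 1))
            + C (2 * ((m : ℝ) + 2)) * X * P (m + 1)
            + C (((m : ℝ) + 2) * ((m : ℝ) + 1)) * derivative^[m] ((X ^ 2 - 1) ^ (m + 1)))
          - C (2 * ((m : ℝ) + 2)) * (X * P (m + 1)
            + C ((m : ℝ) + 1) * derivative^[m] ((X ^ 2 - 1) ^ (m + 1))) := by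
      rw [← hA, ← hI]
    push_cast
    simp only [C_add, C_1, C_mul, C_pow, map_ofNat] at key ⊢
    linear_combination key

lemma eqIII (n : ℕ) :
    derivative (P (n + 1))
      = C (2 * ((n : ℝ) + 1)) * X * derivative (P n) + C (2 * ((n : ℝ) + 1) ^ 2) * P n := by
  have h1 : derivative (P (n + 1)) = derivative^[n + 1] (derivative ((X ^ 2 - 1) ^ (n + 1))) := by
    rw [P]
    exact (Function.iterate_succ_apply' _ _ _).symm.trans (Function.iterate_succ_apply _ _ _)
  rw [h1, deriv_upow n, mul_assoc, iterate_derivative_C_mul, l1 n]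
  have h2 : derivative^[n + 1] ((X ^ 2 - 1) ^ n) = derivative (P n) := by
    rw [P]; exact Function.iterate_succ_apply' _ _ _
  rw [h2, P]
  simp only [C_add, C_1, C_mul, C_pow, map_ofNat]
  ring

lemma bonnet (n : ℕ) :
    P (n + 2) = C (2 * (2 * (n : ℝ) + 3)) * X * P (n + 1)
      - C (4 * ((n : ℝ) + 1) ^ 2) * P n := by
  have h1 := eqII (n + 1)
  have h2 := eqIII n
  have h3 := eqII n
  push_cast at h1
  simp only [C_add, C_1, C_mul, C_pow, map_ofNat] at h1 h2 h3 ⊢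
  linear_combination h1 + (2 * (X ^ 2 - 1 : ℝ[X])) * h2
    - (2 * (C (n : ℝ) + 1) * X) * h3

/-- normalization constant -/
noncomputable def c (n : ℕ) : ℝ := 1 / (2 ^ n * n.factorial)

lemma c_ne_zero (n : ℕ) : c n ≠ 0 := by
  have : (0:ℝ) < 2 ^ n * n.factorial := by positivity
  simp only [c]
  positivity

lemma legendre_eq : ∀ n : ℕ, legendre n = C (c n) * P n
  | 0 => by simp [legendre, P, c]
  | 1 => by
      simp only [legendre, P, c, pow_one, Function.iterate_one]
      simp only [derivative_sub, derivative_one, derivative_X_pow, sub_zero]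
      have h2 : (C ((2:ℕ):ℝ) * X ^ (2-1) : ℝ[X]) = C 2 * X := by norm_num
      rw [h2, ← mul_assoc, ← C_mul]
      norm_num
  | (n + 2) => by
      have h1 := legendre_eq (n + 1)
      have h2 := legendre_eq n
      have e1 : (2 * (n : ℝ) + 3) / ((n : ℝ) + 2) * c (n + 1)
          = c (n + 2) * (2 * (2 * (n : ℝ) + 3)) := by
        have hn2 : ((n : ℝ) + 2) ≠ 0 := by positivity
        have hf : ((n.factorial : ℝ)) ≠ 0 := by positivity
        simp only [c, Nat.factorial_succ]
        push_cast
        field_simp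
        ring
      have e2 : ((n : ℝ) + 1) / ((n : ℝ) + 2) * c n
          = c (n + 2) * (4 * ((n : ℝ) + 1) ^ 2) := by
        have hn2 : ((n : ℝ) + 2) ≠ 0 := by positivity
        have hf : ((n.factorial : ℝ)) ≠ 0 := by positivity
        simp only [c, Nat.factorial_succ]
        push_cast
        field_simp
        ring
      rw [legendre, h1, h2, bonnet n]
      calc C ((2 * (n : ℝ) + 3) / ((n : ℝ) + 2)) * X * (C (c (n + 1)) * P (n + 1)) -
            C (((n : ℝ) + 1) / ((n : ℝ) + 2)) * (C (c n) * P n)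
          = C ((2 * (n : ℝ) + 3) / ((n : ℝ) + 2) * c (n + 1)) * (X * P (n + 1)) -
            C (((n : ℝ) + 1) / ((n : ℝ) + 2) * c n) * P n := by
            simp only [C_mul]; ring
        _ = C (c (n + 2)) * (C (2 * (2 * (n : ℝ) + 3)) * X * P (n + 1) -
              C (4 * ((n : ℝ) + 1) ^ 2) * P n) := by
            rw [e1, e2]
            simp only [C_mul]; ring

lemma rolle_finset (f : ℝ[X]) :
    ∀ (m : ℕ) (t : Finset ℝ) (ht : t.Nonempty), t.card = m + 1 →
      (∀ x ∈ t, f.eval x = 0) →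
      ∃ s : Finset ℝ, s.card = m ∧
        ∀ x ∈ s, (t.min' ht < x ∧ x < t.max' ht) ∧ f.derivative.eval x = 0 := by
  intro m
  induction m with
  | zero => exact fun t ht hcard hr => ⟨∅, rfl, by simp⟩
  | succ m ih =>
    intro t ht hcard hr
    have hMt : t.max' ht ∈ t := t.max'_mem ht
    set M := t.max' ht with hM
    set t' := t.erase M with ht'
    have hsub : t' ⊆ t := Finset.erase_subset _ _
    have hcard' : t'.card = m + 1 := by rw [ht', Finset.card_erase_of_mem hMt, hcard]; omega
    have ht'ne : t'.Nonempty := Finset.card_pos.mp (by omega)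
    obtain ⟨s, hsc, hs⟩ := ih t' ht'ne hcard' (fun x hx => hr x (hsub hx))
    have hM't' : t'.max' ht'ne ∈ t' := t'.max'_mem ht'ne
    set M' := t'.max' ht'ne with hM'
    have hM'M : M' < M :=
      lt_of_le_of_ne (t.le_max' M' (hsub hM't')) (Finset.ne_of_mem_erase hM't')
    obtain ⟨y, hy, hy0⟩ := exists_deriv_eq_zero hM'M f.continuousOn
      (by rw [hr M' (hsub hM't'), hr M hMt])
    rw [Polynomial.deriv] at hy0
    have hys : y ∉ s := fun hys => absurd (hs y hys).1.2 (not_lt.mpr (le_of_lt hy.1))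
    refine ⟨insert y s, by rw [Finset.card_insert_of_notMem hys, hsc], ?_⟩
    intro x hx
    rcases Finset.mem_insert.mp hx with rfl | hx
    · exact ⟨⟨lt_of_le_of_lt (t.min'_le M' (hsub hM't')) hy.1, hy.2⟩, hy0⟩
    · obtain ⟨⟨h1, h2⟩, h3⟩ := hs x hx
      refine ⟨⟨lt_of_le_of_lt (t.min'_le _ (hsub (t'.min'_mem ht'ne))) h1, ?_⟩, h3⟩
      exact h2.trans hM'M

lemma factor (n : ℕ) : ∀ k, k ≤ n →
    ∃ r : ℝ[X], derivative^[k] ((X ^ 2 - 1) ^ n) = (X ^ 2 - 1) ^ (n - k) * r := by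
  intro k
  induction k with
  | zero => exact fun _ => ⟨1, by simp⟩
  | succ k ih =>
    intro hk
    obtain ⟨r, hr⟩ := ih (by omega)
    have he : n - k = (n - (k + 1)) + 1 := by omega
    refine ⟨C (2 * ((n : ℝ) - k)) * X * r + (X ^ 2 - 1) * derivative r, ?_⟩
    rw [Function.iterate_succ_apply', hr, he]
    rw [derivative_mul, derivative_pow]
    have hc : (((n - (k + 1) + 1 : ℕ) : ℝ)) = (n : ℝ) - k := by
      push_cast [Nat.cast_sub (by omega : k + 1 ≤ n)]
      ring
    rw [derivative_sub, derivative_one, derivative_X_pow]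
    simp only [hc, Nat.add_sub_cancel, sub_zero]
    push_cast
    simp only [C_add, C_1, C_mul, C_sub, map_ofNat]
    ring

lemma stage (n : ℕ) : ∀ k, k ≤ n →
    ∃ s : Finset ℝ, s.card = k ∧ ∀ x ∈ s,
      (x ∈ Set.Ioo (-1 : ℝ) 1) ∧ (derivative^[k] ((X ^ 2 - 1) ^ n)).eval x = 0 := by
  intro k
  induction k with
  | zero => exact fun _ => ⟨∅, rfl, by simp⟩
  | succ k ih =>
    intro hk
    obtain ⟨s, hsc, hs⟩ := ih (by omega)
    -- q_k vanishes at -1 and 1 since (X^2-1)^(n-k) divides it with n-k ≥ 1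
    obtain ⟨r, hr⟩ := factor n k (by omega)
    have hnk : n - k = (n - (k+1)) + 1 := by omega
    have hv : ∀ z : ℝ, z ^ 2 = 1 → (derivative^[k] ((X ^ 2 - 1) ^ n)).eval z = 0 := by
      intro z hz
      rw [hr, eval_mul, eval_pow, eval_sub, eval_pow, eval_one, eval_X, hz, sub_self, hnk,
        zero_pow (by omega), zero_mul]
    set t : Finset ℝ := insert (-1 : ℝ) (insert 1 s) with htdef
    have hm1 : (-1 : ℝ) ∉ insert (1:ℝ) s := by
      simp only [Finset.mem_insert]
      push_neg
      exact ⟨by norm_num, fun h => absurd (hs _ h).1.1 (by norm_num)⟩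
    have h1s : (1:ℝ) ∉ s := fun h => absurd (hs _ h).1.2 (by norm_num)
    have htc : t.card = k + 1 + 1 := by
      rw [htdef, Finset.card_insert_of_notMem hm1, Finset.card_insert_of_notMem h1s, hsc]
    have htne : t.Nonempty := ⟨-1, Finset.mem_insert_self _ _⟩
    have htroots : ∀ x ∈ t, (derivative^[k] ((X ^ 2 - 1) ^ n)).eval x = 0 := by
      intro x hx
      rcases Finset.mem_insert.mp hx with rfl | hx
      · exact hv _ (by norm_num)
      rcases Finset.mem_insert.mp hx with rfl | hx
      · exact hv _ (by norm_num)
      · exact (hs x hx).2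
    have hmin : t.min' htne = -1 := by
      refine le_antisymm (t.min'_le _ (Finset.mem_insert_self _ _)) ?_
      refine Finset.le_min' _ _ _ fun y hy => ?_
      rcases Finset.mem_insert.mp hy with rfl | hy
      · exact le_refl _
      rcases Finset.mem_insert.mp hy with rfl | hy
      · norm_num
      · exact le_of_lt (hs y hy).1.1
    have hmax : t.max' htne = 1 := by
      refine le_antisymm ?_ (t.le_max' _ (Finset.mem_insert.mpr (Or.inr (Finset.mem_insert_self _ _))))
      refine Finset.max'_le _ _ _ fun y hy => ?_
      rcases Finset.mem_insert.mp hy with rfl | hy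
      · norm_num
      rcases Finset.mem_insert.mp hy with rfl | hy
      · exact le_refl _
      · exact le_of_lt (hs y hy).1.2
    obtain ⟨s', hs'c, hs'⟩ := rolle_finset _ (k + 1) t htne htc htroots
    refine ⟨s', hs'c, fun x hx => ?_⟩
    obtain ⟨⟨hx1, hx2⟩, hx3⟩ := hs' x hx
    rw [hmin] at hx1; rw [hmax] at hx2
    rw [← Function.iterate_succ_apply' derivative] at hx3
    exact ⟨⟨hx1, hx2⟩, hx3⟩

lemma P_coeff (n : ℕ) : (P n).coeff n = ((2 * n).descFactorial n : ℝ) := by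
  have hmonic0 : (X ^ 2 - 1 : ℝ[X]).Monic := by
    simpa using monic_X_pow_sub_C (1 : ℝ) (n := 2) (by norm_num)
  have hmonic : ((X ^ 2 - 1 : ℝ[X]) ^ n).Monic := hmonic0.pow _
  have hdeg : ((X ^ 2 - 1 : ℝ[X]) ^ n).natDegree = 2 * n := by
    rw [hmonic0.natDegree_pow]
    have : (X ^ 2 - 1 : ℝ[X]) = X ^ 2 - C 1 := by simp
    rw [this, natDegree_X_pow_sub_C]
    ring
  rw [P, coeff_iterate_derivative]
  have h2n : n + n = 2 * n := by ring
  rw [h2n]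
  have : ((X ^ 2 - 1 : ℝ[X]) ^ n).coeff (2 * n) = 1 := by
    rw [← hdeg]; exact hmonic.coeff_natDegree
  rw [this, nsmul_eq_mul, mul_one]

lemma P_ne_zero (n : ℕ) : P n ≠ 0 := by
  intro h
  have := P_coeff n
  rw [h, coeff_zero] at this
  have h2 : (2 * n).descFactorial n ≠ 0 := by
    rw [Ne, Nat.descFactorial_eq_zero_iff_lt]
    omega
  exact h2 (by exact_mod_cast this.symm)

lemma P_natDegree_le (n : ℕ) : (P n).natDegree ≤ n := by
  have h := natDegree_iterate_derivative ((X ^ 2 - 1 : ℝ[X]) ^ n) n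
  have hdeg : ((X ^ 2 - 1 : ℝ[X]) ^ n).natDegree ≤ 2 * n := by
    calc ((X ^ 2 - 1 : ℝ[X]) ^ n).natDegree ≤ n * (X ^ 2 - 1 : ℝ[X]).natDegree :=
      natDegree_pow_le
    _ ≤ 2 * n := by
      have h1 : (X ^ 2 - 1 : ℝ[X]) = X ^ 2 - C 1 := by simp
      have : (X ^ 2 - 1 : ℝ[X]).natDegree = 2 := by rw [h1, natDegree_X_pow_sub_C]
      nlinarith
  rw [P]
  omega

end LegendreAux

open LegendreAux in
theorem legendre_roots (n : ℕ) :
    (legendre n).roots.toFinset.card = n ∧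
      ∀ r ∈ (legendre n).roots, r ∈ Set.Ioo (-1 : ℝ) 1 := by
  have hroots : (legendre n).roots = (P n).roots := by
    rw [legendre_eq n, roots_C_mul _ (c_ne_zero n)]
  obtain ⟨s, hsc, hs⟩ := stage n n le_rfl
  have hsP : ∀ x ∈ s, x ∈ (P n).roots := fun x hx =>
    mem_roots'.mpr ⟨P_ne_zero n, (hs x hx).2⟩
  have hsub : s ⊆ (P n).roots.toFinset := fun x hx => Multiset.mem_toFinset.mpr (hsP x hx)
  have hle1 : (P n).roots.toFinset.card ≤ Multiset.card (P n).roots :=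
    (P n).roots.toFinset_card_le
  have hle2 : Multiset.card (P n).roots ≤ n := (card_roots' _).trans (P_natDegree_le n)
  have hge : n ≤ (P n).roots.toFinset.card := by
    have := Finset.card_le_card hsub
    omega
  have hcard : (P n).roots.toFinset.card = n := le_antisymm (hle1.trans hle2) hge
  have hseq : s = (P n).roots.toFinset := Finset.eq_of_subset_of_card_le hsub (by omega)
  constructor
  · rw [hroots, hcard]
  · intro r hr
    have hrt : r ∈ (P n).roots.toFinset := Multiset.mem_toFinset.mpr (hroots ▸ hr)
    rw [← hseq] at hrt
    exact (hs r hrt).1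
end

section
/- For every n ≥ 0, the Legendre polynomial L_n is orthogonal to all polynomials of degree strictly less than n: if p is a polynomial with deg p < n, then ∫_{−1}^{1} L_n(x) p(x) dx = 0. -/
open Polynomial intervalIntegral

open Nat in
noncomputable def momF (n k : ℕ) : ℝ :=
  if n ≤ k ∧ Even (k - n) then
    2 * (k ! : ℝ) / (((k - n)‼ : ℝ) * (((k + n + 1)‼ : ℝ))) else 0

lemma contLeg (n k : ℕ) : Continuous fun x : ℝ => x ^ k * (legendre n).eval x :=
  (continuous_pow k).mul (legendre n).continuous

lemma moment_pow (k : ℕ) :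
    (∫ x in (-1:ℝ)..1, x ^ k) = if Even k then 2 / ((k:ℝ) + 1) else 0 := by
  rw [integral_pow]
  rcases Nat.even_or_odd k with h | h
  · rw [if_pos h]
    have h1 : Odd (k + 1) := Even.add_one h
    rw [h1.neg_one_pow]
    ring
  · rw [if_neg (Nat.not_even_iff_odd.mpr h)]
    have h1 : Even (k + 1) := Odd.add_one h
    rw [h1.neg_one_pow]
    norm_num

open Nat in
lemma momF_rec (m k : ℕ) :
    ((2 * (m:ℝ) + 3) / ((m:ℝ) + 2)) * momF (m+1) (k+1)
      - (((m:ℝ) + 1) / ((m:ℝ) + 2)) * momF m k = momF (m+2) k := by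
  have hm2 : ((m:ℝ) + 2) ≠ 0 := by positivity
  unfold momF
  rcases lt_or_ge k m with hk | hk
  · rw [if_neg (fun h : (m+1 ≤ k+1 ∧ Even (k+1-(m+1))) => absurd h.1 (by omega)),
      if_neg (fun h : (m ≤ k ∧ Even (k-m)) => absurd h.1 (by omega)),
      if_neg (fun h : (m+2 ≤ k ∧ Even (k-(m+2))) => absurd h.1 (by omega))]
    ring
  · obtain ⟨d, rfl⟩ : ∃ d, k = m + d := ⟨k - m, by omega⟩
    rcases Nat.even_or_odd d with ⟨r, rfl⟩ | hodd
    · rcases Nat.eq_zero_or_pos r with rfl | hr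
      · -- diagonal case k = m
        have c1 : m + 1 ≤ m + (0+0) + 1 ∧ Even (m + (0+0) + 1 - (m+1)) :=
          ⟨by omega, by rw [show m + (0+0) + 1 - (m+1) = 0 by omega]; exact Even.zero⟩
        have c2 : m ≤ m + (0+0) ∧ Even (m + (0+0) - m) :=
          ⟨by omega, by rw [show m + (0+0) - m = 0 by omega]; exact Even.zero⟩
        have c3 : ¬ (m + 2 ≤ m + (0+0) ∧ Even (m + (0+0) - (m+2))) :=
          fun h => absurd h.1 (by omega)
        rw [if_pos c1, if_pos c2, if_neg c3]
        have e1 : m + (0+0) + 1 - (m + 1) = 0 := by omega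
        have e2 : m + (0+0) - m = 0 := by omega
        have e3 : m + (0+0) + 1 + (m + 1) + 1 = (2*m+1) + 2 := by omega
        have e4 : m + (0+0) + m + 1 = 2*m+1 := by omega
        have e5 : m + (0+0) + 1 = m + 1 := by omega
        have e6 : m + (0+0) = m := by omega
        rw [e1, e2, e3, e4, e5, e6, Nat.doubleFactorial_add_two, Nat.factorial_succ,
          show (0‼ : ℕ) = 1 from rfl]
        have h0 : (2*(m:ℝ)+3) ≠ 0 := by positivity
        have h1 : ((2*m+1)‼ : ℝ) ≠ 0 := by positivity
        push_cast
        field_simp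
        ring
      · -- main case: k = m + 2s + 2 with r = s + 1
        obtain ⟨s, rfl⟩ : ∃ s, r = s + 1 := ⟨r - 1, by omega⟩
        have c1 : m + 1 ≤ m + (s+1+(s+1)) + 1 ∧ Even (m + (s+1+(s+1)) + 1 - (m+1)) :=
          ⟨by omega, by rw [show m + (s+1+(s+1)) + 1 - (m+1) = 2*(s+1) by omega]; exact even_two_mul _⟩
        have c2 : m ≤ m + (s+1+(s+1)) ∧ Even (m + (s+1+(s+1)) - m) :=
          ⟨by omega, by rw [show m + (s+1+(s+1)) - m = 2*(s+1) by omega]; exact even_two_mul _⟩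
        have c3 : m + 2 ≤ m + (s+1+(s+1)) ∧ Even (m + (s+1+(s+1)) - (m+2)) :=
          ⟨by omega, by rw [show m + (s+1+(s+1)) - (m+2) = 2*s by omega]; exact even_two_mul _⟩
        rw [if_pos c1, if_pos c2, if_pos c3]
        have e1 : m + (s+1+(s+1)) + 1 - (m + 1) = 2*s + 2 := by omega
        have e2 : m + (s+1+(s+1)) - m = 2*s + 2 := by omega
        have e3 : m + (s+1+(s+1)) - (m+2) = 2*s := by omega
        have e4 : m + (s+1+(s+1)) + 1 + (m+1) + 1 = (2*s + 2*m + 3) + 2 := by omega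
        have e5 : m + (s+1+(s+1)) + (m+2) + 1 = (2*s + 2*m + 3) + 2 := by omega
        have e6 : m + (s+1+(s+1)) + m + 1 = 2*s + 2*m + 3 := by omega
        have e7 : m + (s+1+(s+1)) + 1 = (m + 2*s + 2) + 1 := by omega
        have e8 : m + (s+1+(s+1)) = m + 2*s + 2 := by omega
        rw [e1, e2, e3, e4, e5, e6, e7, e8, Nat.doubleFactorial_add_two,
          Nat.doubleFactorial_add_two, Nat.factorial_succ]
        have h1 : ((2*s)‼ : ℝ) ≠ 0 := by positivity
        have h2 : ((2*s + 2*m + 3)‼ : ℝ) ≠ 0 := by positivity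
        have h3 : (((m + 2*s + 2)! : ℝ)) ≠ 0 := by positivity
        push_cast
        field_simp
        ring
    · -- odd d: everything vanishes
      have h1 : ¬ (m + 1 ≤ m + d + 1 ∧ Even (m + d + 1 - (m + 1))) := by
        rintro ⟨-, h⟩
        rw [show m + d + 1 - (m + 1) = d by omega] at h
        exact (Nat.not_even_iff_odd.mpr hodd) h
      have h2 : ¬ (m ≤ m + d ∧ Even (m + d - m)) := by
        rintro ⟨-, h⟩
        rw [show m + d - m = d by omega] at h
        exact (Nat.not_even_iff_odd.mpr hodd) h
      have h3 : ¬ (m + 2 ≤ m + d ∧ Even (m + d - (m + 2))) := by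
        rintro ⟨hle, h⟩
        rw [show m + d - (m + 2) = d - 2 by omega] at h
        rcases h with ⟨t, ht⟩
        exact (Nat.not_even_iff_odd.mpr hodd) ⟨t + 1, by omega⟩
      rw [if_neg h1, if_neg h2, if_neg h3]
      ring

open Nat in
lemma key (n : ℕ) : ∀ k : ℕ,
    (∫ x in (-1:ℝ)..1, x ^ k * (legendre n).eval x) = momF n k := by
  induction n using Nat.strong_induction_on with
  | _ n ih =>
    match n with
    | 0 =>
      intro k
      have h0 : (∫ x in (-1:ℝ)..1, x ^ k * (legendre 0).eval x)
          = ∫ x in (-1:ℝ)..1, x ^ k := by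
        apply integral_congr; intro x _; simp [legendre]
      rw [h0, moment_pow]
      unfold momF
      rcases Nat.even_or_odd k with h | h
      · have c1 : 0 ≤ k ∧ Even (k - 0) := ⟨Nat.zero_le _, by simpa using h⟩
        rw [if_pos h, if_pos c1]
        simp only [Nat.sub_zero, Nat.add_zero]
        have hfact : (k‼ : ℝ) * ((k+1)‼ : ℝ) = ((k:ℝ) + 1) * (k ! : ℝ) := by
          rw [← Nat.cast_mul, mul_comm, ← Nat.factorial_eq_mul_doubleFactorial,
            Nat.factorial_succ]
          push_cast; ring
        rw [hfact]
        have h1 : ((k : ℝ) + 1) ≠ 0 := by positivity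
        have h4 : ((k ! : ℝ)) ≠ 0 := by positivity
        field_simp
      · rw [if_neg (Nat.not_even_iff_odd.mpr h),
          if_neg (fun hc : (0 ≤ k ∧ Even (k - 0)) =>
            (Nat.not_even_iff_odd.mpr h) (by simpa using hc.2))]
    | 1 =>
      intro k
      have h0 : (∫ x in (-1:ℝ)..1, x ^ k * (legendre 1).eval x)
          = ∫ x in (-1:ℝ)..1, x ^ (k+1) := by
        apply integral_congr; intro x _
        show x ^ k * (legendre 1).eval x = x ^ (k+1)
        simp [legendre, pow_succ]
      rw [h0, moment_pow]
      unfold momF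
      rcases Nat.even_or_odd k with h | h
      · have c1 : ¬ Even (k + 1) := by
          rw [Nat.even_add_one]
          exact fun hc => hc h
        have c2 : ¬ (1 ≤ k ∧ Even (k - 1)) := by
          rintro ⟨h1, h2⟩
          rw [Nat.even_sub h1] at h2
          exact Nat.not_even_one (h2.mp h)
        rw [if_neg c1, if_neg c2]
      · obtain ⟨t, rfl⟩ := h
        have c1 : Even (2*t+1+1) := by
          rw [show 2*t+1+1 = 2*(t+1) by omega]; exact even_two_mul _
        have c2 : 1 ≤ 2*t+1 ∧ Even (2*t+1-1) :=
          ⟨by omega, by rw [show 2*t+1-1 = 2*t by omega]; exact even_two_mul t⟩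
        rw [if_pos c1, if_pos c2]
        rw [show 2*t+1-1 = 2*t by omega, show 2*t+1+1+1 = (2*t+1)+2 by omega,
          Nat.doubleFactorial_add_two]
        have hfact : ((2*t+1)! : ℝ) = ((2*t+1)‼ : ℝ) * ((2*t)‼ : ℝ) := by
          rw [← Nat.cast_mul, ← Nat.factorial_eq_mul_doubleFactorial]
        rw [hfact]
        have h1 : ((2*t)‼ : ℝ) ≠ 0 := by positivity
        have h2 : ((2*t+1)‼ : ℝ) ≠ 0 := by positivity
        have h3 : (2*(t:ℝ)+1+2) ≠ 0 := by positivity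
        push_cast
        field_simp
        ring
    | (m + 2) =>
      intro k
      have ih1 := ih (m+1) (by omega) (k+1)
      have ih0 := ih m (by omega) k
      have hrw : (∫ x in (-1:ℝ)..1, x ^ k * (legendre (m+2)).eval x)
          = ∫ x in (-1:ℝ)..1,
              (((2*(m:ℝ)+3)/((m:ℝ)+2)) * (x ^ (k+1) * (legendre (m+1)).eval x)
                - (((m:ℝ)+1)/((m:ℝ)+2)) * (x ^ k * (legendre m).eval x)) := by
        apply integral_congr; intro x _
        show x ^ k * (legendre (m+2)).eval x = _
        rw [show legendre (m+2) = C ((2 * (m : ℝ) + 3) / ((m : ℝ) + 2)) * X *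
              legendre (m + 1) - C (((m : ℝ) + 1) / ((m : ℝ) + 2)) * legendre m from rfl]
        simp [pow_succ]
        ring
      rw [hrw, integral_sub ((show Continuous fun x : ℝ => ((2*(m:ℝ)+3)/((m:ℝ)+2)) * (x ^ (k+1) * (legendre (m+1)).eval x) from continuous_const.mul (contLeg (m+1) (k+1))).intervalIntegrable _ _)
          ((show Continuous fun x : ℝ => (((m:ℝ)+1)/((m:ℝ)+2)) * (x ^ k * (legendre m).eval x) from continuous_const.mul (contLeg m k)).intervalIntegrable _ _),
        intervalIntegral.integral_const_mul, intervalIntegral.integral_const_mul, ih1, ih0, momF_rec]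

theorem legendre_orthogonal_to_lower_degree (n : ℕ) (p : Polynomial ℝ)
    (hp : p.degree < n) :
    ∫ x in (-1 : ℝ)..1, (legendre n).eval x * p.eval x = 0 := by
  by_cases hp0 : p = 0
  · simp [hp0]
  · have hdeg : p.natDegree < n := (Polynomial.natDegree_lt_iff_degree_lt hp0).mpr hp
    have h1 : (∫ x in (-1:ℝ)..1, (legendre n).eval x * p.eval x)
        = ∫ x in (-1:ℝ)..1, ∑ i ∈ Finset.range n,
            p.coeff i * (x ^ i * (legendre n).eval x) := by
      apply integral_congr; intro x _
      show (legendre n).eval x * p.eval x = _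
      rw [Polynomial.eval_eq_sum_range' hdeg, Finset.mul_sum]
      exact Finset.sum_congr rfl (fun i _ => by ring)
    rw [h1, integral_finset_sum
        (fun i _ => (show Continuous fun x : ℝ => p.coeff i * (x ^ i * (legendre n).eval x) from continuous_const.mul (contLeg n i)).intervalIntegrable _ _)]
    apply Finset.sum_eq_zero
    intro i hi
    rw [intervalIntegral.integral_const_mul, key n i]
    have hz : momF n i = 0 := by
      unfold momF
      rw [if_neg (fun h : (n ≤ i ∧ Even (i - n)) =>
        absurd h.1 (by simp only [Finset.mem_range] at hi; omega))]
    rw [hz, mul_zero]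
end
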